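/- Given a weak functional completeness structure Φ for the action ▷ of V on D, every functor F : C → D carries a strong functor structure F̂ with underlying ordinary functor F, defined on f : Γ ▷ X → Y by F̂⟨Γ⟩f = Φ_Γ(γ ↦ F(f⁻(γ))); moreover every natural transformation α : F ⇒ G between ordinary functors is a strong natural transformation F̂ ⇒ Ĝ for the strong structures thus constructed. -/

import Mathlib

open CategoryTheory MonoidalCategory

universe v₁ v₂ v₃ u₁ u₂ u₃

/-- A left action of a monoidal category `V` on a category `C`. -/
structure LeftAction (V : Type u₁) [Category.{v₁} V] [MonoidalCategory V]
    (C : Type u₂) [Category.{v₂} C] where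
  F : V ⥤ C ⥤ C
  lam : ∀ X : C, (F.obj (𝟙_ V)).obj X ≅ X
  lam_natural : ∀ {X Y : C} (f : X ⟶ Y),
    (F.obj (𝟙_ V)).map f ≫ (lam Y).hom = (lam X).hom ≫ f
  assoc : ∀ (Γ' Γ : V) (X : C),
    (F.obj (Γ' ⊗ Γ)).obj X ≅ (F.obj Γ').obj ((F.obj Γ).obj X)
  assoc_natural : ∀ {Γ' Δ' Γ Δ : V} (u : Γ' ⟶ Δ') (v : Γ ⟶ Δ) {X Y : C} (f : X ⟶ Y),
    (F.map (u ⊗ₘ v)).app X ≫ (F.obj (Δ' ⊗ Δ)).map f ≫ (assoc Δ' Δ Y).hom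
      = (assoc Γ' Γ X).hom ≫ (F.map u).app ((F.obj Γ).obj X)
          ≫ (F.obj Δ').map ((F.map v).app X ≫ (F.obj Δ).map f)
  triangle : ∀ (Γ : V) (X : C),
    (F.map (ρ_ Γ).inv).app X ≫ (assoc Γ (𝟙_ V) X).hom ≫ (F.obj Γ).map (lam X).hom = 𝟙 _
  unit_assoc : ∀ (Γ : V) (X : C),
    (assoc (𝟙_ V) Γ X).hom ≫ (lam ((F.obj Γ).obj X)).hom = (F.map (λ_ Γ).hom).app X
  pentagon : ∀ (Γ₁ Γ₂ Γ₃ : V) (X : C),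
    (F.map (α_ Γ₁ Γ₂ Γ₃).hom).app X ≫ (assoc Γ₁ (Γ₂ ⊗ Γ₃) X).hom
        ≫ (F.obj Γ₁).map (assoc Γ₂ Γ₃ X).hom
      = (assoc (Γ₁ ⊗ Γ₂) Γ₃ X).hom ≫ (assoc Γ₁ Γ₂ ((F.obj Γ₃).obj X)).hom

namespace LeftAction

variable {V : Type u₁} [Category.{v₁} V] [MonoidalCategory V]
variable {C : Type u₂} [Category.{v₂} C] {D : Type u₃} [Category.{v₃} D]

/-- `a.act Γ X` is the action of `Γ` on an object `X`, written `Γ ▷ X` in the paper. -/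
abbrev act (a : LeftAction V C) (Γ : V) (X : C) : C := (a.F.obj Γ).obj X

/-- The action of `Γ` on a morphism, `Γ ▷ f`. -/
abbrev actMap (a : LeftAction V C) (Γ : V) {X Y : C} (f : X ⟶ Y) :
    a.act Γ X ⟶ a.act Γ Y := (a.F.obj Γ).map f

/-- The action of a morphism of `V` on an object, `u ▷ X`. -/
abbrev actHom (a : LeftAction V C) {Γ Δ : V} (u : Γ ⟶ Δ) (X : C) :
    a.act Γ X ⟶ a.act Δ X := (a.F.map u).app X

/-- Applying a morphism `f : Γ ▷ X ⟶ Y` to a point `γ : I ⟶ Γ`,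
written `f⁻(γ)` in the paper. -/
def papp (a : LeftAction V C) {Γ : V} {X Y : C}
    (f : a.act Γ X ⟶ Y) (γ : 𝟙_ V ⟶ Γ) : X ⟶ Y :=
  (a.lam X).inv ≫ a.actHom γ X ≫ f

end LeftAction

/-- A strength for a functor `F : C ⥤ D`, with respect to left actions of `V`
on `C` and on `D`. -/
structure Strength {V : Type u₁} [Category.{v₁} V] [MonoidalCategory V]
    {C : Type u₂} [Category.{v₂} C] {D : Type u₃} [Category.{v₃} D]
    (a : LeftAction V C) (b : LeftAction V D) (F : C ⥤ D) where
  str : ∀ (Γ : V) (X : C), b.act Γ (F.obj X) ⟶ F.obj (a.act Γ X)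
  natural_fst : ∀ {Γ Δ : V} (u : Γ ⟶ Δ) (X : C),
    b.actHom u (F.obj X) ≫ str Δ X = str Γ X ≫ F.map (a.actHom u X)
  natural_snd : ∀ (Γ : V) {X Y : C} (f : X ⟶ Y),
    b.actMap Γ (F.map f) ≫ str Γ Y = str Γ X ≫ F.map (a.actMap Γ f)
  str_unit : ∀ X : C, str (𝟙_ V) X ≫ F.map (a.lam X).hom = (b.lam (F.obj X)).hom
  str_assoc : ∀ (Γ' Γ : V) (X : C),
    (b.assoc Γ' Γ (F.obj X)).hom ≫ b.actMap Γ' (str Γ X) ≫ str Γ' (a.act Γ X)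
      = str (Γ' ⊗ Γ) X ≫ F.map (a.assoc Γ' Γ X).hom

/-- A strong functor structure on an assignment of objects `obj : C → D` :
operations `F⟨Γ⟩` sending `f : Γ ▷ X ⟶ Y` to `F⟨Γ⟩ f : Γ ▷ F X ⟶ F Y`,
natural in `Γ` and compatible with the unitors and associators. -/
structure StrongFunctorStr {V : Type u₁} [Category.{v₁} V] [MonoidalCategory V]
    {C : Type u₂} [Category.{v₂} C] {D : Type u₃} [Category.{v₃} D]
    (a : LeftAction V C) (b : LeftAction V D) (obj : C → D) where
  smap : ∀ {Γ : V} {X Y : C}, (a.act Γ X ⟶ Y) → (b.act Γ (obj X) ⟶ obj Y)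
  natural : ∀ {Γ Δ : V} (u : Γ ⟶ Δ) {X Y : C} (f : a.act Δ X ⟶ Y),
    smap (a.actHom u X ≫ f) = b.actHom u (obj X) ≫ smap f
  unit : ∀ X : C, smap (a.lam X).hom = (b.lam (obj X)).hom
  comp : ∀ {Γ' Γ : V} {X Y Z : C} (f : a.act Γ X ⟶ Y) (g : a.act Γ' Y ⟶ Z),
    smap ((a.assoc Γ' Γ X).hom ≫ a.actMap Γ' f ≫ g)
      = (b.assoc Γ' Γ (obj X)).hom ≫ b.actMap Γ' (smap f) ≫ smap g

/-- The strong-naturality condition for `τ : F ⟶ G` with respect to strengths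
`sF`, `sG` : `τ_Y ∘ F⟨Γ⟩f = G⟨Γ⟩f ∘ (Γ ▷ τ_X)`, where `F⟨Γ⟩f = F f ∘ str`. -/
def IsStrongNatTrans {V : Type u₁} [Category.{v₁} V] [MonoidalCategory V]
    {C : Type u₂} [Category.{v₂} C] {D : Type u₃} [Category.{v₃} D]
    {a : LeftAction V C} {b : LeftAction V D} {F G : C ⥤ D}
    (sF : Strength a b F) (sG : Strength a b G) (τ : F ⟶ G) : Prop :=
  ∀ (Γ : V) {X Y : C} (f : a.act Γ X ⟶ Y),
    (sF.str Γ X ≫ F.map f) ≫ τ.app Y = b.actMap Γ (τ.app X) ≫ (sG.str Γ X ≫ G.map f)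

/-- A weak functional completeness structure for an action of `V` on `D`:
an assignment of a morphism `Φ_Γ ζ : Γ ▷ X ⟶ Y` with `(Φ_Γ ζ)⁻ = ζ` to each
function `ζ : V(I,Γ) → D(X,Y)`, natural in `Γ`, `X`, `Y` and compatible with
the tensor of `V`. -/
structure WFCStructure {V : Type u₁} [Category.{v₁} V] [MonoidalCategory V]
    {D : Type u₃} [Category.{v₃} D] (b : LeftAction V D) where
  Phi : ∀ (Γ : V) (X Y : D), ((𝟙_ V ⟶ Γ) → (X ⟶ Y)) → (b.act Γ X ⟶ Y)
  papp_Phi : ∀ (Γ : V) (X Y : D) (ζ : (𝟙_ V ⟶ Γ) → (X ⟶ Y)) (γ : 𝟙_ V ⟶ Γ),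
    b.papp (Phi Γ X Y ζ) γ = ζ γ
  natural_ctx : ∀ {Γ Δ : V} (u : Γ ⟶ Δ) (X Y : D)
      (ζ : (𝟙_ V ⟶ Δ) → (X ⟶ Y)),
    b.actHom u X ≫ Phi Δ X Y ζ = Phi Γ X Y (fun γ => ζ (γ ≫ u))
  natural_dom : ∀ (Γ : V) {X' X Y : D} (h : X' ⟶ X)
      (ζ : (𝟙_ V ⟶ Γ) → (X ⟶ Y)),
    b.actMap Γ h ≫ Phi Γ X Y ζ = Phi Γ X' Y (fun γ => h ≫ ζ γ)
  natural_cod : ∀ (Γ : V) {X Y Y' : D} (k : Y ⟶ Y')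
      (ζ : (𝟙_ V ⟶ Γ) → (X ⟶ Y)),
    Phi Γ X Y ζ ≫ k = Phi Γ X Y' (fun γ => ζ γ ≫ k)
  tensor : ∀ (Γ' Γ : V) (X Y : D) (ζ : (𝟙_ V ⟶ Γ' ⊗ Γ) → (X ⟶ Y)),
    Phi (Γ' ⊗ Γ) X Y ζ
      = (b.assoc Γ' Γ X).hom ≫
          Phi Γ' (b.act Γ X) Y (fun γ' =>
            Phi Γ X Y (fun γ => ζ ((ρ_ (𝟙_ V)).inv ≫ (γ' ⊗ₘ γ))))
section Helpers

variable {V : Type u₁} [Category.{v₁} V] [MonoidalCategory V]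

lemma lam_inv_natural {C : Type u₂} [Category.{v₂} C] (a : LeftAction V C)
    {X Y : C} (h : X ⟶ Y) :
    (a.lam X).inv ≫ (a.F.obj (𝟙_ V)).map h = h ≫ (a.lam Y).inv := by
  rw [Iso.inv_comp_eq, ← Category.assoc, Iso.eq_comp_inv]
  exact a.lam_natural h

lemma phi_at_unit {D : Type u₃} [Category.{v₃} D] {b : LeftAction V D}
    (Φ : WFCStructure b) (X Y : D) (ζ : (𝟙_ V ⟶ 𝟙_ V) → (X ⟶ Y)) :
    Φ.Phi (𝟙_ V) X Y ζ = (b.lam X).hom ≫ ζ (𝟙 (𝟙_ V)) := by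
  have h := Φ.papp_Phi (𝟙_ V) X Y ζ (𝟙 (𝟙_ V))
  rw [← h]
  simp [LeftAction.papp, LeftAction.actHom]

lemma papp_actHom {C : Type u₂} [Category.{v₂} C] (a : LeftAction V C)
    {Γ Δ : V} (u : Γ ⟶ Δ) {X Y : C} (f : a.act Δ X ⟶ Y) (γ : 𝟙_ V ⟶ Γ) :
    a.papp (a.actHom u X ≫ f) γ = a.papp f (γ ≫ u) := by
  simp only [LeftAction.papp, LeftAction.actHom, Functor.map_comp, NatTrans.comp_app,
    Category.assoc]

lemma papp_at_one {C : Type u₂} [Category.{v₂} C] (a : LeftAction V C)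
    {X Y : C} (f : a.act (𝟙_ V) X ⟶ Y) :
    a.papp f (𝟙 (𝟙_ V)) = (a.lam X).inv ≫ f := by
  simp [LeftAction.papp, LeftAction.actHom]

lemma papp_tensor {C : Type u₂} [Category.{v₂} C] (a : LeftAction V C)
    {Γ' Γ : V} {X Y Z : C} (f : a.act Γ X ⟶ Y) (g : a.act Γ' Y ⟶ Z)
    (γ' : 𝟙_ V ⟶ Γ') (γ : 𝟙_ V ⟶ Γ) :
    a.papp ((a.assoc Γ' Γ X).hom ≫ a.actMap Γ' f ≫ g) ((ρ_ (𝟙_ V)).inv ≫ (γ' ⊗ₘ γ))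
      = a.papp f γ ≫ a.papp g γ' := by
  have h1 : (a.F.map (γ' ⊗ₘ γ)).app X ≫ (a.assoc Γ' Γ X).hom
      = (a.assoc (𝟙_ V) (𝟙_ V) X).hom ≫ (a.F.map γ').app (a.act (𝟙_ V) X)
          ≫ (a.F.obj Γ').map ((a.F.map γ).app X) := by
    have h := a.assoc_natural γ' γ (𝟙 X)
    simpa using h
  have h2 : (a.F.map (ρ_ (𝟙_ V)).inv).app X ≫ (a.assoc (𝟙_ V) (𝟙_ V) X).hom
      = (a.F.obj (𝟙_ V)).map (a.lam X).inv := by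
    have t := a.triangle (𝟙_ V) X
    rw [← cancel_mono ((a.F.obj (𝟙_ V)).map (a.lam X).hom), Category.assoc, t,
      ← CategoryTheory.Functor.map_comp, Iso.inv_hom_id, CategoryTheory.Functor.map_id]
  simp only [LeftAction.papp, LeftAction.actHom, LeftAction.actMap, Functor.map_comp,
    NatTrans.comp_app, Category.assoc]
  slice_lhs 3 4 => rw [h1]
  slice_lhs 2 3 => rw [h2]
  slice_lhs 4 5 => rw [← CategoryTheory.Functor.map_comp]
  slice_lhs 2 3 => rw [(a.F.map γ').naturality]
  slice_lhs 3 4 => rw [← CategoryTheory.Functor.map_comp]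
  rw [← NatTrans.naturality_assoc (a.F.map γ') ((a.lam X).inv ≫ (a.F.map γ).app X ≫ f) g,
    ← Category.assoc, lam_inv_natural]
  simp only [Category.assoc]

end Helpers

/-- given a weak functional completeness structure `Φ` for the
action of `V` on `D`, every functor `F : C ⥤ D` carries a strong functor
structure with underlying ordinary functor `F`, given by
`F̂⟨Γ⟩ f = Φ_Γ (γ ↦ F(f⁻ γ))`; and every natural transformation `τ : F ⟶ G`
is strong for the structures thus constructed. -/
theorem statement7 {V : Type u₁} [Category.{v₁} V] [MonoidalCategory V]
    {C : Type u₂} [Category.{v₂} C] {D : Type u₃} [Category.{v₃} D]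
    (a : LeftAction V C) (b : LeftAction V D) (Φ : WFCStructure b) :
    (∀ F : C ⥤ D, ∃ S : StrongFunctorStr a b F.obj,
      (∀ {Γ : V} {X Y : C} (f : a.act Γ X ⟶ Y),
        S.smap f = Φ.Phi Γ (F.obj X) (F.obj Y) (fun γ => F.map (a.papp f γ))) ∧
      (∀ {X Y : C} (f : X ⟶ Y),
        S.smap ((a.lam X).hom ≫ f) = (b.lam (F.obj X)).hom ≫ F.map f)) ∧
    (∀ (F G : C ⥤ D) (τ : F ⟶ G) (Γ : V) (X Y : C) (f : a.act Γ X ⟶ Y),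
      Φ.Phi Γ (F.obj X) (F.obj Y) (fun γ => F.map (a.papp f γ)) ≫ τ.app Y
        = b.actMap Γ (τ.app X) ≫
            Φ.Phi Γ (G.obj X) (G.obj Y) (fun γ => G.map (a.papp f γ))) := by
  constructor
  · intro F
    refine ⟨{
      smap := fun {Γ X Y} f => Φ.Phi Γ (F.obj X) (F.obj Y) (fun γ => F.map (a.papp f γ))
      natural := ?_
      unit := ?_
      comp := ?_ }, fun {Γ X Y} f => rfl, ?_⟩
    · intro Γ Δ u X Y f
      rw [Φ.natural_ctx]
      congr 1
      funext γ
      rw [papp_actHom]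
    · intro X
      rw [phi_at_unit, papp_at_one, Iso.inv_hom_id, CategoryTheory.Functor.map_id,
        Category.comp_id]
    · intro Γ' Γ X Y Z f g
      rw [Φ.tensor]
      have e1 : (fun γ' => Φ.Phi Γ (F.obj X) (F.obj Z)
            (fun γ => F.map (a.papp ((a.assoc Γ' Γ X).hom ≫ a.actMap Γ' f ≫ g)
              ((ρ_ (𝟙_ V)).inv ≫ (γ' ⊗ₘ γ)))))
          = fun γ' => (Φ.Phi Γ (F.obj X) (F.obj Y) (fun γ => F.map (a.papp f γ)))
              ≫ F.map (a.papp g γ') := by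
        funext γ'
        rw [Φ.natural_cod]
        congr 1
        funext γ
        rw [papp_tensor, Functor.map_comp]
      rw [e1, Φ.natural_dom]
    · intro X Y f
      dsimp only
      rw [phi_at_unit, papp_at_one, Iso.inv_hom_id_assoc]
  · intro F G τ Γ X Y f
    rw [Φ.natural_cod, Φ.natural_dom]
    congr 1
    funext γ
    exact τ.naturality (a.papp f γ)
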